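/- arXiv:2307.08330 — 5 statements merged into one kernel-verified Lean document; each statement's English description precedes it below -/
import Mathlib

section
/- Fix d ≥ 3. Represent bipartite vectors in ℂ^d ⊗ ℂ^d as d×d complex matrices, with ⟨ψ|(E ⊗ I)|φ⟩ = tr(Ψᴴ E Φ) for a d×d matrix E. Let Φ₀ be the matrix of |00⟩ − |12⟩, let Φᵢ (1 ≤ i ≤ d−1) be the matrix of |i0⟩ − |0i⟩, and let Σ be the all-ones matrix (the stopper state). If a d×d complex matrix E satisfies tr(Ψᴴ E Φ) = 0 for every pair of distinct states Ψ ≠ Φ from the set {Φ₀, Φ₁, …, Φ_{d−1}, Σ}, then E = c·I for some c ∈ ℂ. -/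
open Matrix

/-- Coefficient matrix of the basis vector `|i⟩⊗|j⟩` in `ℂ^{d₁} ⊗ ℂ^{d₂}`. -/
noncomputable def ket (d₁ d₂ : ℕ) (i j : ℕ) : Matrix (Fin d₁) (Fin d₂) ℂ :=
  fun a b => if (a : ℕ) = i ∧ (b : ℕ) = j then 1 else 0

lemma ket_eq_std (d : ℕ) (a b : Fin d) : ket d d a b = Matrix.single a b 1 := by
  ext x y
  simp [ket, Matrix.single, Fin.ext_iff, and_comm, eq_comm]

lemma ket_eq_std' (d : ℕ) (a b : ℕ) (ha : a < d) (hb : b < d) :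
    ket d d a b = Matrix.single ⟨a, ha⟩ ⟨b, hb⟩ 1 :=
  ket_eq_std d ⟨a, ha⟩ ⟨b, hb⟩

lemma std_conjT (d : ℕ) (a b : Fin d) :
    (Matrix.single a b (1:ℂ))ᴴ = Matrix.single b a 1 := by
  ext x y; simp [Matrix.single, conjTranspose_apply, and_comm]

lemma trace_std_mul (d : ℕ) (b a : Fin d) (M : Matrix (Fin d) (Fin d) ℂ) :
    trace (Matrix.single b a (1:ℂ) * M) = M a b := by
  rw [trace]
  rw [Finset.sum_eq_single b]
  · simp
  · intro x _ hx; simp [Matrix.diag, Matrix.single_mul_apply_of_ne (h := hx)]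
  · simp

lemma mul_std_apply (d : ℕ) (c e : Fin d) (E : Matrix (Fin d) (Fin d) ℂ) (x y : Fin d) :
    (E * Matrix.single c e (1:ℂ)) x y = if y = e then E x c else 0 := by
  by_cases h : y = e
  · subst h; simp
  · simp [Matrix.mul_single_apply_of_ne (hbj := h), h]

lemma trace_ket_ket' (d : ℕ) (E : Matrix (Fin d) (Fin d) ℂ) (a b c e : ℕ)
    (ha : a < d) (hb : b < d) (hc : c < d) (he : e < d) :
    trace ((ket d d a b)ᴴ * (E * ket d d c e)) = if b = e then E ⟨a,ha⟩ ⟨c,hc⟩ else 0 := by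
  rw [ket_eq_std' d a b ha hb, ket_eq_std' d c e hc he, std_conjT, trace_std_mul,
    mul_std_apply]
  simp [Fin.ext_iff]

lemma trace_J_mul (d : ℕ) (J : Matrix (Fin d) (Fin d) ℂ) (hJ : ∀ x y, J x y = 1)
    (M : Matrix (Fin d) (Fin d) ℂ) :
    trace (Jᴴ * M) = ∑ x, ∑ y, M y x := by
  simp [trace, Matrix.diag, mul_apply, conjTranspose_apply, hJ]

lemma trace_J_ket (d : ℕ) (E J : Matrix (Fin d) (Fin d) ℂ) (hJ : ∀ x y, J x y = 1) (c e : ℕ)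
    (hc : c < d) (he : e < d) :
    trace (Jᴴ * (E * ket d d c e)) = ∑ a, E a ⟨c, hc⟩ := by
  rw [ket_eq_std' d c e hc he, trace_J_mul d J hJ]
  simp only [mul_std_apply]
  rw [Finset.sum_comm]
  simp

lemma trace_ket_J (d : ℕ) (E J : Matrix (Fin d) (Fin d) ℂ) (hJ : ∀ x y, J x y = 1) (a b : ℕ)
    (ha : a < d) (hb : b < d) :
    trace ((ket d d a b)ᴴ * (E * J)) = ∑ c, E ⟨a, ha⟩ c := by
  rw [ket_eq_std' d a b ha hb, std_conjT, trace_std_mul, mul_apply]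
  simp [hJ]

lemma trace_sub_expand (d : ℕ) (E P Q R S : Matrix (Fin d) (Fin d) ℂ) :
    trace ((P - Q)ᴴ * (E * (R - S))) =
      trace (Pᴴ * (E * R)) - trace (Pᴴ * (E * S)) - trace (Qᴴ * (E * R))
        + trace (Qᴴ * (E * S)) := by
  simp only [conjTranspose_sub, Matrix.mul_sub, Matrix.sub_mul, trace_sub]
  ring

/-- The `d+1` states of Theorem 1 in `ℂ^d ⊗ ℂ^d`: index `0` is `|00⟩ − |12⟩`,
index `i` with `1 ≤ i ≤ d−1` is `|i0⟩ − |0i⟩`, and index `d` is the stopper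
state (all-ones coefficient matrix). -/
noncomputable def stateDD (d : ℕ) (i : ℕ) : Matrix (Fin d) (Fin d) ℂ :=
  if i = 0 then ket d d 0 0 - ket d d 1 2
  else if i < d then ket d d i 0 - ket d d 0 i
  else fun _ _ => 1

lemma stateDD_zero (d : ℕ) : stateDD d 0 = ket d d 0 0 - ket d d 1 2 := by
  simp [stateDD]

lemma stateDD_mid (d : ℕ) (i : ℕ) (h0 : i ≠ 0) (h : i < d) :
    stateDD d i = ket d d i 0 - ket d d 0 i := by
  simp [stateDD, h0, h]

lemma stateDD_top (d : ℕ) (h0 : d ≠ 0) : stateDD d d = fun _ _ => 1 := by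
  simp [stateDD, h0]; rfl

theorem alice_trivial_dd (d : ℕ) (hd : 3 ≤ d) (E : Matrix (Fin d) (Fin d) ℂ)
    (hE : ∀ i j : ℕ, i ≤ d → j ≤ d → i ≠ j →
      Matrix.trace ((stateDD d i)ᴴ * (E * stateDD d j)) = 0) :
    ∃ c : ℂ, E = c • (1 : Matrix (Fin d) (Fin d) ℂ) := by
  have hd0 : (0:ℕ) < d := by omega
  have hd1 : (1:ℕ) < d := by omega
  have hd2 : (2:ℕ) < d := by omega
  -- off-diagonal, both indices nonzero
  have h1 : ∀ i j : ℕ, ∀ hi : i < d, ∀ hj : j < d, i ≠ 0 → j ≠ 0 → i ≠ j →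
      E ⟨i, hi⟩ ⟨j, hj⟩ = 0 := by
    intro i j hi hj hi0 hj0 hij
    have H := hE i j hi.le hj.le hij
    rw [stateDD_mid d i hi0 hi, stateDD_mid d j hj0 hj, trace_sub_expand,
      trace_ket_ket' d E i 0 j 0 hi hd0 hj hd0,
      trace_ket_ket' d E i 0 0 j hi hd0 hd0 hj,
      trace_ket_ket' d E 0 i j 0 hd0 hi hj hd0,
      trace_ket_ket' d E 0 i 0 j hd0 hi hd0 hj] at H
    simpa [Ne.symm hj0, hi0, hij] using H
  -- first row, j ≠ 0, 2
  have h2 : ∀ j : ℕ, ∀ hj : j < d, j ≠ 0 → j ≠ 2 → E ⟨0, hd0⟩ ⟨j, hj⟩ = 0 := by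
    intro j hj hj0 hj2
    have H := hE 0 j hd0.le hj.le (Ne.symm hj0)
    rw [stateDD_zero, stateDD_mid d j hj0 hj, trace_sub_expand,
      trace_ket_ket' d E 0 0 j 0 hd0 hd0 hj hd0,
      trace_ket_ket' d E 0 0 0 j hd0 hd0 hd0 hj,
      trace_ket_ket' d E 1 2 j 0 hd1 hd2 hj hd0,
      trace_ket_ket' d E 1 2 0 j hd1 hd2 hd0 hj] at H
    simpa [Ne.symm hj0, Ne.symm hj2] using H
  -- first column, j ≠ 0, 2
  have h3 : ∀ j : ℕ, ∀ hj : j < d, j ≠ 0 → j ≠ 2 → E ⟨j, hj⟩ ⟨0, hd0⟩ = 0 := by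
    intro j hj hj0 hj2
    have H := hE j 0 hj.le hd0.le hj0
    rw [stateDD_mid d j hj0 hj, stateDD_zero, trace_sub_expand,
      trace_ket_ket' d E j 0 0 0 hj hd0 hd0 hd0,
      trace_ket_ket' d E j 0 1 2 hj hd0 hd1 hd2,
      trace_ket_ket' d E 0 j 0 0 hd0 hj hd0 hd0,
      trace_ket_ket' d E 0 j 1 2 hd0 hj hd1 hd2] at H
    simpa [hj0, hj2] using H
  -- E 0 2 = 0 and E 2 0 = 0
  have h2' : E ⟨0, hd0⟩ ⟨2, hd2⟩ = 0 := by
    have H := hE 0 2 hd0.le hd2.le (by omega)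
    rw [stateDD_zero, stateDD_mid d 2 (by omega) hd2, trace_sub_expand,
      trace_ket_ket' d E 0 0 2 0 hd0 hd0 hd2 hd0,
      trace_ket_ket' d E 0 0 0 2 hd0 hd0 hd0 hd2,
      trace_ket_ket' d E 1 2 2 0 hd1 hd2 hd2 hd0,
      trace_ket_ket' d E 1 2 0 2 hd1 hd2 hd0 hd2] at H
    have e10 : E ⟨1, hd1⟩ ⟨0, hd0⟩ = 0 := h3 1 hd1 (by omega) (by omega)
    simp only [e10] at H
    simpa using H
  have h3' : E ⟨2, hd2⟩ ⟨0, hd0⟩ = 0 := by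
    have H := hE 2 0 hd2.le hd0.le (by omega)
    rw [stateDD_mid d 2 (by omega) hd2, stateDD_zero, trace_sub_expand,
      trace_ket_ket' d E 2 0 0 0 hd2 hd0 hd0 hd0,
      trace_ket_ket' d E 2 0 1 2 hd2 hd0 hd1 hd2,
      trace_ket_ket' d E 0 2 0 0 hd0 hd2 hd0 hd0,
      trace_ket_ket' d E 0 2 1 2 hd0 hd2 hd1 hd2] at H
    have e01 : E ⟨0, hd0⟩ ⟨1, hd1⟩ = 0 := h2 1 hd1 (by omega) (by omega)
    simp only [e01] at H
    simpa using H
  -- all off-diagonal entries vanish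
  have hoff : ∀ i j : Fin d, i ≠ j → E i j = 0 := by
    intro i j hij
    by_cases hi0 : (i : ℕ) = 0
    · have hi' : i = ⟨0, hd0⟩ := Fin.ext hi0
      subst hi'
      have hj0 : (j : ℕ) ≠ 0 := fun h => hij (Fin.ext (by simp [h]))
      by_cases hj2 : (j : ℕ) = 2
      · have : j = ⟨2, hd2⟩ := Fin.ext hj2
        rw [this]; exact h2'
      · have := h2 j j.isLt hj0 hj2
        simpa using this
    · by_cases hj0 : (j : ℕ) = 0
      · have hj' : j = ⟨0, hd0⟩ := Fin.ext hj0
        subst hj'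
        by_cases hi2 : (i : ℕ) = 2
        · have : i = ⟨2, hd2⟩ := Fin.ext hi2
          rw [this]; exact h3'
        · have := h3 i i.isLt hi0 hi2
          simpa using this
      · have := h1 i j i.isLt j.isLt hi0 hj0 (fun h => hij (Fin.ext h))
        simpa using this
  -- column sums collapse to diagonal entries
  have hcolsum : ∀ j : Fin d, (∑ a, E a j) = E j j := by
    intro j
    rw [Finset.sum_eq_single j]
    · intro a _ ha; exact hoff a j ha
    · simp
  have hdiag : ∀ j : Fin d, E j j = E ⟨0, hd0⟩ ⟨0, hd0⟩ := by
    intro j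
    by_cases hj0 : (j : ℕ) = 0
    · have hj' : j = ⟨0, hd0⟩ := Fin.ext hj0
      rw [hj']
    · have H := hE d j le_rfl j.isLt.le (by omega)
      rw [stateDD_top d (by omega), stateDD_mid d j hj0 j.isLt] at H
      simp only [Matrix.mul_sub, trace_sub] at H
      rw [trace_J_ket d E _ (fun _ _ => rfl) j 0 j.isLt hd0,
        trace_J_ket d E _ (fun _ _ => rfl) 0 j hd0 j.isLt] at H
      have H' : (∑ a, E a j) - (∑ a, E a ⟨0, hd0⟩) = 0 := by
        simpa using H
      rw [hcolsum, hcolsum] at H'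
      exact sub_eq_zero.mp H'
  refine ⟨E ⟨0, hd0⟩ ⟨0, hd0⟩, ?_⟩
  ext i j
  by_cases h : i = j
  · subst h
    simp [Matrix.one_apply, hdiag i]
  · simp [Matrix.one_apply, h, hoff i j h]
end

section
/- Let 3 ≤ d₁ ≤ d₂. Represent vectors in ℂ^{d₁} ⊗ ℂ^{d₂} as d₁×d₂ complex matrices, with the second-party action (I ⊗ E) sending Φ to Φ Eᵀ for E a d₂×d₂ matrix. Let S be the set consisting of the matrices of |00⟩ − |12⟩, of |i0⟩ − |0i⟩ for 1 ≤ i ≤ d₁−1, of |0j⟩ − |2,(j−1)⟩ for d₁ ≤ j ≤ d₂−1, and the all-ones d₁×d₂ matrix. If a d₂×d₂ complex matrix E satisfies tr(Ψᴴ Φ Eᵀ) = 0 for all distinct Ψ, Φ ∈ S, then E = c·I for some c ∈ ℂ. -/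
open Matrix

/-- The `d₂+1` states of Theorem 2 in `ℂ^{d₁} ⊗ ℂ^{d₂}` (Eq. (5)): index `0` is
`|00⟩ − |12⟩`; index `i` with `1 ≤ i ≤ d₁−1` is `|i0⟩ − |0i⟩`; index `j` with
`d₁ ≤ j ≤ d₂−1` is `|0j⟩ − |2,(j−1)⟩`; index `d₂` is the stopper (all-ones). -/
noncomputable def stateD12 (d₁ d₂ : ℕ) (i : ℕ) : Matrix (Fin d₁) (Fin d₂) ℂ :=
  if i = 0 then ket d₁ d₂ 0 0 - ket d₁ d₂ 1 2
  else if i < d₁ then ket d₁ d₂ i 0 - ket d₁ d₂ 0 i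
  else if i < d₂ then ket d₁ d₂ 0 i - ket d₁ d₂ 2 (i - 1)
  else fun _ _ => 1

noncomputable def Jmat (d₁ d₂ : ℕ) : Matrix (Fin d₁) (Fin d₂) ℂ := fun _ _ => 1

lemma ket_apply {d₁ d₂ : ℕ} (u v : ℕ) (hu : u < d₁) (hv : v < d₂) (a : Fin d₁) (b : Fin d₂) :
    ket d₁ d₂ u v a b = if a = ⟨u,hu⟩ ∧ b = ⟨v,hv⟩ then 1 else 0 := by
  simp [ket, Fin.ext_iff]

lemma trA {d₁ d₂ : ℕ} (p q r s : ℕ) (hp : p < d₁) (hq : q < d₂) (hr : r < d₁) (hs : s < d₂)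
    (M : Matrix (Fin d₂) (Fin d₂) ℂ) :
    Matrix.trace ((ket d₁ d₂ p q)ᴴ * (ket d₁ d₂ r s * M)) =
      if p = r then M ⟨s, hs⟩ ⟨q, hq⟩ else 0 := by
  simp only [Matrix.trace, Matrix.diag, Matrix.mul_apply, Matrix.conjTranspose_apply,
    ket_apply p q hp hq, ket_apply r s hr hs, apply_ite (star : ℂ → ℂ), star_one, star_zero,
    ite_mul, one_mul, zero_mul, ite_and]
  simp [Finset.sum_ite_eq, Finset.sum_ite_eq', Fin.mk.injEq]

lemma trJ {d₁ d₂ : ℕ} (p q : ℕ) (hp : p < d₁) (hq : q < d₂)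
    (E : Matrix (Fin d₂) (Fin d₂) ℂ) :
    Matrix.trace ((ket d₁ d₂ p q)ᴴ * (Jmat d₁ d₂ * Eᵀ)) = ∑ c, E ⟨q, hq⟩ c := by
  simp only [Matrix.trace, Matrix.diag, Matrix.mul_apply, Matrix.conjTranspose_apply,
    ket_apply p q hp hq, apply_ite (star : ℂ → ℂ), star_one, star_zero, Jmat,
    ite_mul, one_mul, zero_mul, ite_and, Matrix.transpose_apply]
  simp [Finset.sum_ite_eq, Finset.sum_ite_eq']

lemma trSub {d₁ d₂ : ℕ} (p q p' q' r s r' s' : ℕ)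
    (hp : p < d₁) (hq : q < d₂) (hp' : p' < d₁) (hq' : q' < d₂)
    (hr : r < d₁) (hs : s < d₂) (hr' : r' < d₁) (hs' : s' < d₂)
    (E : Matrix (Fin d₂) (Fin d₂) ℂ) :
    Matrix.trace ((ket d₁ d₂ p q - ket d₁ d₂ p' q')ᴴ *
      ((ket d₁ d₂ r s - ket d₁ d₂ r' s') * Eᵀ)) =
    ((if p = r then E ⟨q,hq⟩ ⟨s,hs⟩ else 0) - (if p = r' then E ⟨q,hq⟩ ⟨s',hs'⟩ else 0))
    - ((if p' = r then E ⟨q',hq'⟩ ⟨s,hs⟩ else 0)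
      - (if p' = r' then E ⟨q',hq'⟩ ⟨s',hs'⟩ else 0)) := by
  simp only [conjTranspose_sub, Matrix.sub_mul, Matrix.mul_sub, trace_sub,
    trA p q r s hp hq hr hs, trA p q r' s' hp hq hr' hs',
    trA p' q' r s hp' hq' hr hs, trA p' q' r' s' hp' hq' hr' hs', Matrix.transpose_apply]
  ring

lemma trSubJ {d₁ d₂ : ℕ} (p q p' q' : ℕ)
    (hp : p < d₁) (hq : q < d₂) (hp' : p' < d₁) (hq' : q' < d₂)
    (E : Matrix (Fin d₂) (Fin d₂) ℂ) :
    Matrix.trace ((ket d₁ d₂ p q - ket d₁ d₂ p' q')ᴴ * (Jmat d₁ d₂ * Eᵀ)) =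
      (∑ c, E ⟨q, hq⟩ c) - ∑ c, E ⟨q', hq'⟩ c := by
  simp only [conjTranspose_sub, Matrix.sub_mul, trace_sub, trJ p q hp hq, trJ p' q' hp' hq']

lemma state_zero (d₁ d₂ : ℕ) : stateD12 d₁ d₂ 0 = ket d₁ d₂ 0 0 - ket d₁ d₂ 1 2 := by
  simp [stateD12]

lemma state_mid (d₁ d₂ : ℕ) {i : ℕ} (h0 : i ≠ 0) (h : i < d₁) :
    stateD12 d₁ d₂ i = ket d₁ d₂ i 0 - ket d₁ d₂ 0 i := by
  simp [stateD12, h0, h]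

lemma state_hi (d₁ d₂ : ℕ) {i : ℕ} (h0 : i ≠ 0) (h : ¬ i < d₁) (h' : i < d₂) :
    stateD12 d₁ d₂ i = ket d₁ d₂ 0 i - ket d₁ d₂ 2 (i - 1) := by
  simp [stateD12, h0, h, h']

lemma state_top (d₁ d₂ : ℕ) {i : ℕ} (h0 : i ≠ 0) (h : ¬ i < d₁) (h' : ¬ i < d₂) :
    stateD12 d₁ d₂ i = Jmat d₁ d₂ := by
  simp only [stateD12, h0, h, h', if_neg, if_false]
  rfl

theorem bob_trivial_d12 (d₁ d₂ : ℕ) (h1 : 3 ≤ d₁) (h2 : d₁ ≤ d₂)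
    (E : Matrix (Fin d₂) (Fin d₂) ℂ)
    (hE : ∀ i j : ℕ, i ≤ d₂ → j ≤ d₂ → i ≠ j →
      Matrix.trace ((stateD12 d₁ d₂ i)ᴴ * (stateD12 d₁ d₂ j * Eᵀ)) = 0) :
    ∃ c : ℂ, E = c • (1 : Matrix (Fin d₂) (Fin d₂) ℂ) := by
  have hd2 : 3 ≤ d₂ := h1.trans h2
  have h0 : (0:ℕ) < d₂ := by omega
  -- Fact A : first column vanishes above row 1
  have factA : ∀ x (hx2 : 2 ≤ x) (hx : x < d₂), E ⟨x,hx⟩ ⟨0,h0⟩ = 0 := by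
    intro x hx2 hx
    have h := hE x 0 (by omega) (by omega) (by omega)
    by_cases hxd : x < d₁
    · rw [state_mid d₁ d₂ (by omega) hxd, state_zero,
        trSub x 0 0 x 0 0 1 2 hxd h0 (by omega) hx (by omega) h0 (by omega) (by omega)] at h
      simpa [show x ≠ 0 by omega, show x ≠ 1 by omega] using h
    · rw [state_hi d₁ d₂ (by omega) hxd hx, state_zero,
        trSub 0 x 2 (x-1) 0 0 1 2 (by omega) hx (by omega) (by omega)
          (by omega) h0 (by omega) (by omega)] at h
      simpa using h
  -- Fact B : first row vanishes right of column 1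
  have factB : ∀ s (hs2 : 2 ≤ s) (hs : s < d₂), E ⟨0,h0⟩ ⟨s,hs⟩ = 0 := by
    intro s hs2 hs
    have h := hE 0 s (by omega) (by omega) (by omega)
    by_cases hsd : s < d₁
    · rw [state_zero, state_mid d₁ d₂ (by omega) hsd,
        trSub 0 0 1 2 s 0 0 s (by omega) h0 (by omega) (by omega) hsd h0 (by omega) hs] at h
      simpa [show 0 ≠ s by omega, show 1 ≠ s by omega] using h
    · rw [state_zero, state_hi d₁ d₂ (by omega) hsd hs,
        trSub 0 0 1 2 0 s 2 (s-1) (by omega) h0 (by omega) (by omega)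
          (by omega) hs (by omega) (by omega)] at h
      simpa using h
  -- Fact C : E 1 0 = 0
  have factC : ∀ h1' : (1:ℕ) < d₂, E ⟨1,h1'⟩ ⟨0,h0⟩ = 0 := by
    intro h1'
    have h := hE 1 0 (by omega) (by omega) (by omega)
    rw [state_mid d₁ d₂ (by omega) (by omega), state_zero,
      trSub 1 0 0 1 0 0 1 2 (by omega) h0 (by omega) h1' (by omega) h0 (by omega) (by omega)] at h
    have hB := factB 2 (by omega) (by omega)
    simp only [hB] at h
    simpa using h
  -- Fact D : E 0 1 = 0
  have factD : ∀ h1' : (1:ℕ) < d₂, E ⟨0,h0⟩ ⟨1,h1'⟩ = 0 := by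
    intro h1'
    have h := hE 0 1 (by omega) (by omega) (by omega)
    rw [state_zero, state_mid d₁ d₂ (by omega) (by omega),
      trSub 0 0 1 2 1 0 0 1 (by omega) h0 (by omega) (by omega) (by omega) h0 (by omega) h1'] at h
    have hA := factA 2 (by omega) (by omega)
    simp only [hA] at h
    simpa using h
  -- all off-diagonal entries vanish
  have hOff : ∀ q, ∀ (s : ℕ) (hq : q < d₂) (hs : s < d₂), q ≠ s → E ⟨q,hq⟩ ⟨s,hs⟩ = 0 := by
    intro q
    induction q using Nat.strong_induction_on with
    | _ q IH =>
    intro s hq hs hne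
    rcases Nat.eq_zero_or_pos s with hs0 | hs1
    · subst hs0
      rcases eq_or_ne q 1 with hq1 | hq1
      · subst hq1; exact factC hq
      · exact factA q (by omega) hq
    rcases Nat.eq_zero_or_pos q with hq0 | hq1
    · subst hq0
      rcases eq_or_ne s 1 with hs1' | hs1'
      · subst hs1'; exact factD hs
      · exact factB s (by omega) hs
    by_cases hqd : q < d₁ <;> by_cases hsd : s < d₁
    · -- both middle
      have h := hE q s (by omega) (by omega) hne
      rw [state_mid d₁ d₂ (by omega) hqd, state_mid d₁ d₂ (by omega) hsd,
        trSub q 0 0 q s 0 0 s hqd h0 (by omega) hq hsd h0 (by omega) hs] at h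
      simpa [hne, show q ≠ 0 by omega, show 0 ≠ s by omega] using h
    · -- q middle, s high
      have h := hE q s (by omega) (by omega) hne
      rw [state_mid d₁ d₂ (by omega) hqd, state_hi d₁ d₂ (by omega) hsd hs,
        trSub q 0 0 q 0 s 2 (s-1) hqd h0 (by omega) hq (by omega) hs (by omega) (by omega)] at h
      have hz := IH 0 (by omega) (s-1) h0 (by omega) (by omega)
      simp only [hz, ite_self] at h
      simpa [show q ≠ 0 by omega] using h
    · -- q high, s middle
      have h := hE q s (by omega) (by omega) hne
      rw [state_hi d₁ d₂ (by omega) hqd hq, state_mid d₁ d₂ (by omega) hsd,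
        trSub 0 q 2 (q-1) s 0 0 s (by omega) hq (by omega) (by omega) hsd h0 (by omega) hs] at h
      have hz := IH (q-1) (by omega) 0 (by omega) h0 (by omega)
      simp only [hz, ite_self] at h
      simpa [show (0:ℕ) ≠ s by omega] using h
    · -- both high
      have h := hE q s (by omega) (by omega) hne
      rw [state_hi d₁ d₂ (by omega) hqd hq, state_hi d₁ d₂ (by omega) hsd hs,
        trSub 0 q 2 (q-1) 0 s 2 (s-1) (by omega) hq (by omega) (by omega)
          (by omega) hs (by omega) (by omega)] at h
      have hz := IH (q-1) (by omega) (s-1) (by omega) (by omega) (by omega)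
      simp only [hz] at h
      simpa using h
  -- row sums equal diagonal entries
  have hrow : ∀ (q : ℕ) (hq : q < d₂), (∑ c, E ⟨q,hq⟩ c) = E ⟨q,hq⟩ ⟨q,hq⟩ := by
    intro q hq
    rw [Finset.sum_eq_single (⟨q,hq⟩ : Fin d₂)]
    · intro b _ hb
      exact hOff q b hq b.isLt (fun hc => hb (by simp [Fin.ext_iff, hc.symm]))
    · intro hmem; exact absurd (Finset.mem_univ _) hmem
  -- diagonal entries are all equal
  have hDiag : ∀ (q : ℕ) (hq : q < d₂), E ⟨q,hq⟩ ⟨q,hq⟩ = E ⟨0,h0⟩ ⟨0,h0⟩ := by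
    intro q
    induction q using Nat.strong_induction_on with
    | _ q IH =>
    intro hq
    rcases Nat.eq_zero_or_pos q with hq0 | hq1
    · subst hq0; rfl
    have h := hE q d₂ (by omega) le_rfl (by omega)
    rw [state_top d₁ d₂ (i := d₂) (by omega) (by omega) (by omega)] at h
    by_cases hqd : q < d₁
    · rw [state_mid d₁ d₂ (by omega) hqd, trSubJ q 0 0 q hqd h0 (by omega) hq,
        hrow 0 h0, hrow q hq] at h
      linear_combination -h
    · rw [state_hi d₁ d₂ (by omega) hqd hq,
        trSubJ 0 q 2 (q-1) (by omega) hq (by omega) (by omega),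
        hrow q hq, hrow (q-1) (by omega)] at h
      have := IH (q-1) (by omega) (by omega)
      linear_combination h + this
  refine ⟨E ⟨0,h0⟩ ⟨0,h0⟩, ?_⟩
  ext a b
  rcases eq_or_ne a b with rfl | hab
  · simp only [Matrix.smul_apply, Matrix.one_apply_eq, smul_eq_mul, mul_one]
    exact hDiag a a.isLt
  · rw [Matrix.smul_apply, Matrix.one_apply_ne hab, smul_eq_mul, mul_zero]
    exact hOff a b a.isLt b.isLt (fun hc => hab (Fin.ext hc))
end

section
/- Fix d ≥ 2 and n ≥ 3, and let ω = e^{2πi/n}. In (ℂ^d)^{⊗n}, the d+1 vectors |φ₀⟩ = |0⟩^{⊗n} − |1⟩^{⊗n}, |φᵢ⟩ = ∑_{k=0}^{n−1} ω^k · |0⟩^{⊗k} ⊗ |i⟩ ⊗ |0⟩^{⊗(n−1−k)} for 1 ≤ i ≤ d−1, and the stopper |S⟩ = (∑_{a=0}^{d−1}|a⟩)^{⊗n} are pairwise orthogonal. -/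
open Finset

/-- The `d+1` states of Theorem 3 in `(ℂ^d)^{⊗n}` (Eq. (6)), as coefficient
functions on multi-indices. Index `0` is `|0⟩^{⊗n} − |1⟩^{⊗n}`; index `i` with
`1 ≤ i ≤ d−1` is `∑_{k<n} ω^k |0⟩^{⊗k}⊗|i⟩⊗|0⟩^{⊗(n−1−k)}` where
`ω = exp(2πi/n)`; index `d` is the stopper `(∑_a |a⟩)^{⊗n}`. -/
noncomputable def stateN (d n : ℕ) (i : ℕ) : (Fin n → Fin d) → ℂ :=
  if i = 0 then
    fun x => (if ∀ l, (x l : ℕ) = 0 then 1 else 0) - (if ∀ l, (x l : ℕ) = 1 then 1 else 0)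
  else if i < d then
    fun x => ∑ k : Fin n, (Complex.exp (2 * Real.pi * Complex.I / n)) ^ (k : ℕ) *
      (if ∀ l, (x l : ℕ) = (if l = k then i else 0) then 1 else 0)
  else fun _ => 1

private lemma sum_delta (d n c : ℕ) (hc : c < d) :
    ∑ x : Fin n → Fin d, (if ∀ l, (x l : ℕ) = c then (1:ℂ) else 0) = 1 := by
  have h : ∀ x : Fin n → Fin d, (∀ l, (x l : ℕ) = c) ↔ x = fun _ => (⟨c, hc⟩ : Fin d) := by
    intro x
    constructor
    · intro h; funext l; exact Fin.ext (h l)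
    · intro h l; subst h; rfl
  simp only [h]
  simp

private lemma sum_delta_pattern (d n i : ℕ) (hi : i < d) (h0 : 0 < d) (k : Fin n) :
    ∑ x : Fin n → Fin d,
      (if ∀ l, (x l : ℕ) = (if l = k then i else 0) then (1:ℂ) else 0) = 1 := by
  have h : ∀ x : Fin n → Fin d,
      (∀ l, (x l : ℕ) = (if l = k then i else 0)) ↔
        x = fun l => if l = k then (⟨i, hi⟩ : Fin d) else ⟨0, h0⟩ := by
    intro x
    constructor
    · intro h; funext l
      apply Fin.ext
      simpa [apply_ite (Fin.val)] using h l
    · intro h l; subst h; simp [apply_ite (Fin.val)]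
  simp only [h]
  simp

private lemma sum_omega (n : ℕ) (hn : 3 ≤ n) :
    ∑ k : Fin n, (Complex.exp (2 * Real.pi * Complex.I / n)) ^ (k : ℕ) = 0 := by
  have hp : IsPrimitiveRoot (Complex.exp (2 * Real.pi * Complex.I / n)) n :=
    Complex.isPrimitiveRoot_exp n (by omega)
  have h := hp.geom_sum_eq_zero (by omega)
  rw [Fin.sum_univ_eq_sum_range]
  exact h

theorem statesN_pairwise_orthogonal (d n : ℕ) (hd : 2 ≤ d) (hn : 3 ≤ n) :
    ∀ i j : ℕ, i ≤ d → j ≤ d → i ≠ j →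
      ∑ x : Fin n → Fin d, (starRingEnd ℂ) (stateN d n i x) * stateN d n j x = 0 := by
  suffices H : ∀ i j : ℕ, i ≤ d → j ≤ d → i < j →
      ∑ x : Fin n → Fin d, (starRingEnd ℂ) (stateN d n i x) * stateN d n j x = 0 by
    intro i j hi hj hij
    rcases hij.lt_or_gt with h | h
    · exact H i j hi hj h
    · have h0 := H j i hj hi h
      have heq : ∑ x : Fin n → Fin d, (starRingEnd ℂ) (stateN d n i x) * stateN d n j x
          = (starRingEnd ℂ)
            (∑ x : Fin n → Fin d, (starRingEnd ℂ) (stateN d n j x) * stateN d n i x) := by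
        rw [map_sum]
        refine Finset.sum_congr rfl fun x _ => ?_
        rw [map_mul, Complex.conj_conj, mul_comm]
      rw [heq, h0, map_zero]
  intro i j hi hj hij
  have hi' : i < d := lt_of_lt_of_le hij hj
  have hs0 : stateN d n 0 = fun x : Fin n → Fin d =>
      (if ∀ l, (x l : ℕ) = 0 then (1:ℂ) else 0) - (if ∀ l, (x l : ℕ) = 1 then 1 else 0) :=
    if_pos rfl
  have hsd : stateN d n d = fun _ => 1 := by
    unfold stateN; rw [if_neg (by omega : ¬ d = 0), if_neg (lt_irrefl d)]
  have hsm : ∀ m : ℕ, ¬ m = 0 → m < d → stateN d n m = fun x : Fin n → Fin d =>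
      ∑ k : Fin n, (Complex.exp (2 * Real.pi * Complex.I / n)) ^ (k : ℕ) *
        (if ∀ l, (x l : ℕ) = (if l = k then m else 0) then 1 else 0) := by
    intro m hm1 hm2; unfold stateN; rw [if_neg hm1, if_pos hm2]
  rcases eq_or_lt_of_le hj with hjd | hj'
  · -- j = d
    rcases Nat.eq_zero_or_pos i with hi0 | hi0
    · -- i = 0, j = d
      subst hi0
      rw [hjd, hs0, hsd]
      dsimp only
      simp only [mul_one, map_sub, apply_ite (starRingEnd ℂ), map_one, map_zero]
      rw [Finset.sum_sub_distrib, sum_delta d n 0 (by omega), sum_delta d n 1 (by omega),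
        sub_self]
    · -- 1 ≤ i < d, j = d
      rw [hjd, hsm i (by omega) (by omega), hsd]
      dsimp only
      simp only [mul_one, map_sum, map_mul, apply_ite (starRingEnd ℂ), map_one, map_zero]
      rw [Finset.sum_comm]
      have h1 : ∀ k : Fin n, ∑ x : Fin n → Fin d,
          (starRingEnd ℂ) ((Complex.exp (2 * Real.pi * Complex.I / n)) ^ (k : ℕ)) *
            (if ∀ l, (x l : ℕ) = (if l = k then i else 0) then (1:ℂ) else 0)
          = (starRingEnd ℂ) ((Complex.exp (2 * Real.pi * Complex.I / n)) ^ (k : ℕ)) := by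
        intro k
        rw [← Finset.mul_sum, sum_delta_pattern d n i (by omega) (by omega) k, mul_one]
      rw [Finset.sum_congr rfl fun k _ => h1 k, ← map_sum, sum_omega n hn, map_zero]
  · -- j < d
    have hj1 : ¬ j = 0 := by omega
    rcases Nat.eq_zero_or_pos i with hi0 | hi0
    · -- i = 0, 1 ≤ j < d
      subst hi0
      rw [hs0, hsm j hj1 hj']
      apply Finset.sum_eq_zero
      intro x _
      dsimp only
      by_cases h0 : ∀ l, (x l : ℕ) = 0
      · have hBz : (∑ k : Fin n, (Complex.exp (2 * Real.pi * Complex.I / n)) ^ (k : ℕ) *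
            (if ∀ l, (x l : ℕ) = (if l = k then j else 0) then (1:ℂ) else 0)) = 0 := by
          refine Finset.sum_eq_zero fun k _ => ?_
          rw [if_neg, mul_zero]
          intro hk
          have h1 := hk k
          rw [if_pos rfl, h0 k] at h1
          omega
        rw [hBz, mul_zero]
      · by_cases h1 : ∀ l, (x l : ℕ) = 1
        · have hBz : (∑ k : Fin n, (Complex.exp (2 * Real.pi * Complex.I / n)) ^ (k : ℕ) *
              (if ∀ l, (x l : ℕ) = (if l = k then j else 0) then (1:ℂ) else 0)) = 0 := by
            refine Finset.sum_eq_zero fun k _ => ?_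
            rw [if_neg, mul_zero]
            intro hk
            haveI : Nontrivial (Fin n) := Fin.nontrivial_iff_two_le.mpr (by omega)
            obtain ⟨l, hl⟩ := exists_ne k
            have h2 := hk l
            rw [if_neg hl, h1 l] at h2
            omega
          rw [hBz, mul_zero]
        · rw [if_neg h0, if_neg h1, sub_zero, map_zero, zero_mul]
    · -- 1 ≤ i < j < d
      rw [hsm i (by omega) hi', hsm j hj1 hj']
      apply Finset.sum_eq_zero
      intro x _
      dsimp only
      by_cases hA : ∃ k : Fin n, ∀ l, (x l : ℕ) = (if l = k then i else 0)
      · obtain ⟨k, hk⟩ := hA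
        have hBz : (∑ k' : Fin n, (Complex.exp (2 * Real.pi * Complex.I / n)) ^ (k' : ℕ) *
            (if ∀ l, (x l : ℕ) = (if l = k' then j else 0) then (1:ℂ) else 0)) = 0 := by
          refine Finset.sum_eq_zero fun k' _ => ?_
          rw [if_neg, mul_zero]
          intro hk'
          have h1 := hk k
          rw [if_pos rfl] at h1
          have h2 := hk' k
          by_cases hkk : k = k'
          · rw [if_pos hkk] at h2; omega
          · rw [if_neg hkk] at h2; omega
        rw [hBz, mul_zero]
      · have hAz : (∑ k : Fin n, (Complex.exp (2 * Real.pi * Complex.I / n)) ^ (k : ℕ) *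
            (if ∀ l, (x l : ℕ) = (if l = k then i else 0) then (1:ℂ) else 0)) = 0 := by
          refine Finset.sum_eq_zero fun k _ => ?_
          rw [if_neg (fun h => hA ⟨k, h⟩), mul_zero]
        rw [hAz, map_zero, zero_mul]
end

section
/- Fix d ≥ 2 and n ≥ 3, let ω = e^{2πi/n}, and fix a party index k₀ ∈ {1,…,n}. Represent vectors in (ℂ^d)^{⊗n} as coefficient functions on multi-indices, and for a d×d matrix E let E^{(k₀)} act on the k₀-th tensor factor. Let S be the set {|0⟩^{⊗n} − |1⟩^{⊗n}} ∪ {∑_{k=0}^{n−1} ω^k |0⟩^{⊗k}⊗|i⟩⊗|0⟩^{⊗(n−1−k)} : 1 ≤ i ≤ d−1} ∪ {(∑_{a=0}^{d−1}|a⟩)^{⊗n}}. If ⟨ψ| E^{(k₀)} |φ⟩ = 0 for all distinct ψ, φ ∈ S, then E = c·I for some c ∈ ℂ. -/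
open Finset

private lemma exists_third {n : ℕ} (hn : 3 ≤ n) (a b : Fin n) :
    ∃ c : Fin n, c ≠ a ∧ c ≠ b := by
  by_contra h
  push_neg at h
  have hsub : (Finset.univ : Finset (Fin n)) ⊆ {a, b} := by
    intro c _
    simp only [Finset.mem_insert, Finset.mem_singleton]
    by_cases hc : c = a
    · exact Or.inl hc
    · exact Or.inr (h c hc)
  have h1 := Finset.card_le_card hsub
  have h2 : ({a, b} : Finset (Fin n)).card ≤ 2 := by
    apply le_trans (Finset.card_insert_le _ _); simp
  simp [Finset.card_univ] at h1
  omega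

private lemma sum_ind_mul {n d : ℕ} (t : Fin n → ℕ) (h : ∀ l, t l < d)
    (g : (Fin n → Fin d) → ℂ) :
    ∑ x : Fin n → Fin d, (if ∀ l, (x l : ℕ) = t l then (1:ℂ) else 0) * g x
      = g (fun l => ⟨t l, h l⟩) := by
  have key : ∀ x : Fin n → Fin d,
      (if ∀ l, (x l : ℕ) = t l then (1:ℂ) else 0) * g x
        = if x = (fun l => ⟨t l, h l⟩) then g x else 0 := by
    intro x
    by_cases hx : x = fun l => ⟨t l, h l⟩
    · rw [if_pos hx, if_pos, one_mul]
      intro l; rw [hx]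
    · rw [if_neg hx, if_neg, zero_mul]
      intro hall
      exact hx (funext fun l => Fin.ext (hall l))
  rw [Finset.sum_congr rfl (fun x _ => key x)]
  rw [Finset.sum_ite_eq' Finset.univ _ g, if_pos (Finset.mem_univ _)]

private lemma sum_zero {n d : ℕ} (hd0 : 0 < d) (hd1 : 1 < d)
    (g : (Fin n → Fin d) → ℂ) :
    ∑ x : Fin n → Fin d,
        ((if ∀ l, (x l : ℕ) = 0 then (1:ℂ) else 0) -
         (if ∀ l, (x l : ℕ) = 1 then (1:ℂ) else 0)) * g x
      = g (fun _ => ⟨0, hd0⟩) - g (fun _ => ⟨1, hd1⟩) := by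
  simp_rw [sub_mul, Finset.sum_sub_distrib]
  rw [sum_ind_mul (fun _ => 0) (fun _ => hd0) g,
      sum_ind_mul (fun _ => 1) (fun _ => hd1) g]

private lemma sum_mid {n d : ℕ} (hd0 : 0 < d) {i : ℕ} (hi : i < d) (c : ℂ)
    (g : (Fin n → Fin d) → ℂ) :
    ∑ x : Fin n → Fin d, (∑ k : Fin n, c ^ (k:ℕ) *
        (if ∀ l, (x l : ℕ) = (if l = k then i else 0) then (1:ℂ) else 0)) * g x
      = ∑ k : Fin n, c ^ (k:ℕ) *
          g (Function.update (fun _ => (⟨0, hd0⟩ : Fin d)) k ⟨i, hi⟩) := by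
  simp_rw [Finset.sum_mul, mul_assoc]
  rw [Finset.sum_comm]
  refine Finset.sum_congr rfl (fun k _ => ?_)
  rw [← Finset.mul_sum]
  congr 1
  have ht : ∀ l : Fin n, (if l = k then i else 0) < d := by
    intro l; split <;> omega
  rw [sum_ind_mul _ ht g]
  congr 1
  funext l
  rw [Function.update_apply]
  split <;> simp_all

private lemma collapse {n : ℕ} (c : ℂ) (k₀ : Fin n) (Q : Prop) [Decidable Q] :
    ∑ k : Fin n, c ^ (k:ℕ) * (if k = k₀ ∧ Q then (1:ℂ) else 0)
      = if Q then c ^ (k₀:ℕ) else 0 := by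
  by_cases hQ : Q
  · simp [hQ, Finset.sum_ite_eq']
  · simp [hQ]

private lemma eval_mid_z {n d : ℕ} (hd0 : 0 < d) (c : ℂ) {j : ℕ} (hj : j ≠ 0)
    (k₀ : Fin n) (b : Fin d) :
    (∑ k : Fin n, c ^ (k:ℕ) *
      (if ∀ l, ((Function.update (fun _ => (⟨0, hd0⟩ : Fin d)) k₀ b) l : ℕ)
          = (if l = k then j else 0) then (1:ℂ) else 0))
      = if (b:ℕ) = j then c ^ (k₀:ℕ) else 0 := by
  have hcond : ∀ k : Fin n,
      (∀ l, ((Function.update (fun _ => (⟨0, hd0⟩ : Fin d)) k₀ b) l : ℕ)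
          = (if l = k then j else 0))
        ↔ (k = k₀ ∧ (b:ℕ) = j) := by
    intro k
    constructor
    · intro h
      have hk : k = k₀ := by
        by_contra hk
        have h1 := h k
        rw [Function.update_apply, if_neg hk] at h1
        simp at h1
        exact hj h1.symm
      subst hk
      have h2 := h k
      rw [Function.update_apply, if_pos rfl, if_pos rfl] at h2
      exact ⟨rfl, h2⟩
    · rintro ⟨rfl, hbj⟩ l
      rw [Function.update_apply]
      by_cases hl : l = k <;> simp [hl, hbj]
  simp only [hcond]
  exact collapse c k₀ _

private lemma eval_mid_one {n d : ℕ} (hn : 3 ≤ n) (hd1 : 1 < d) (c : ℂ) (j : ℕ)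
    (k₀ : Fin n) (b : Fin d) :
    (∑ k : Fin n, c ^ (k:ℕ) *
      (if ∀ l, ((Function.update (fun _ => (⟨1, hd1⟩ : Fin d)) k₀ b) l : ℕ)
          = (if l = k then j else 0) then (1:ℂ) else 0))
      = 0 := by
  refine Finset.sum_eq_zero (fun k _ => ?_)
  rw [if_neg, mul_zero]
  intro h
  obtain ⟨m, hm1, hm2⟩ := exists_third hn k₀ k
  have := h m
  rw [Function.update_apply, if_neg hm1, if_neg hm2] at this
  simp at this

private lemma eval_mid_off {n d : ℕ} (hd0 : 0 < d) (c : ℂ) {j : ℕ} {a : Fin d}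
    (ha : (a:ℕ) ≠ 0) (haj : (a:ℕ) ≠ j) {k k₀ : Fin n} (hk : k ≠ k₀) (b : Fin d) :
    (∑ k' : Fin n, c ^ (k':ℕ) *
      (if ∀ l, ((Function.update (Function.update (fun _ => (⟨0, hd0⟩ : Fin d)) k a) k₀ b) l : ℕ)
          = (if l = k' then j else 0) then (1:ℂ) else 0))
      = 0 := by
  refine Finset.sum_eq_zero (fun k' _ => ?_)
  rw [if_neg, mul_zero]
  intro h
  have h1 := h k
  rw [Function.update_apply, if_neg hk, Function.update_apply, if_pos rfl] at h1
  by_cases hkk : k = k'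
  · rw [if_pos hkk] at h1; exact haj h1
  · rw [if_neg hkk] at h1; exact ha h1

private lemma eval_zero_pt {n d : ℕ} (hn : 3 ≤ n) (hd0 : 0 < d) {a : Fin d}
    (ha : (a:ℕ) ≠ 0) (k k₀ : Fin n) (b : Fin d) :
    ((if ∀ l, ((Function.update (Function.update (fun _ => (⟨0, hd0⟩ : Fin d)) k a) k₀ b) l : ℕ) = 0
        then (1:ℂ) else 0)
     - (if ∀ l, ((Function.update (Function.update (fun _ => (⟨0, hd0⟩ : Fin d)) k a) k₀ b) l : ℕ) = 1
        then (1:ℂ) else 0))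
      = if k = k₀ ∧ (b:ℕ) = 0 then 1 else 0 := by
  have h1 : ¬ (∀ l, ((Function.update (Function.update (fun _ => (⟨0, hd0⟩ : Fin d)) k a) k₀ b) l : ℕ) = 1) := by
    intro h
    obtain ⟨m, hm1, hm2⟩ := exists_third hn k₀ k
    have := h m
    rw [Function.update_apply, if_neg hm1, Function.update_apply, if_neg hm2] at this
    simp at this
  rw [if_neg h1, sub_zero]
  have hiff : (∀ l, ((Function.update (Function.update (fun _ => (⟨0, hd0⟩ : Fin d)) k a) k₀ b) l : ℕ) = 0)
      ↔ (k = k₀ ∧ (b:ℕ) = 0) := by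
    constructor
    · intro h
      have hk : k = k₀ := by
        by_contra hk
        have h2 := h k
        rw [Function.update_apply, if_neg hk, Function.update_apply, if_pos rfl] at h2
        exact ha h2
      subst hk
      have h2 := h k
      rw [Function.update_apply, if_pos rfl] at h2
      exact ⟨rfl, h2⟩
    · rintro ⟨rfl, hb⟩ l
      rw [Function.update_apply]
      by_cases hl : l = k
      · simpa [hl] using hb
      · rw [if_neg hl, Function.update_apply, if_neg hl]
  rw [if_congr hiff rfl rfl]

private lemma eval_mid_z' {n d : ℕ} (hd0 : 0 < d) (c : ℂ) {j : ℕ} (hj : j ≠ 0)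
    (k₀ : Fin n) (b : Fin d) :
    (∑ k : Fin n,
      (if ∀ l, ((Function.update (fun _ => (⟨0, hd0⟩ : Fin d)) k₀ b) l : ℕ)
          = (if l = k then j else 0) then c ^ (k:ℕ) * 1 else 0))
      = if (b:ℕ) = j then c ^ (k₀:ℕ) else 0 := by
  have h := eval_mid_z hd0 c hj k₀ b
  simpa [mul_ite, mul_one, mul_zero] using h

private lemma eval_mid_off' {n d : ℕ} (hd0 : 0 < d) (c : ℂ) {j : ℕ} {a : Fin d}
    (ha : (a:ℕ) ≠ 0) (haj : (a:ℕ) ≠ j) {k k₀ : Fin n} (hk : k ≠ k₀) (b : Fin d) :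
    (∑ k' : Fin n,
      (if ∀ l, ((Function.update (Function.update (fun _ => (⟨0, hd0⟩ : Fin d)) k a) k₀ b) l : ℕ)
          = (if l = k' then j else 0) then c ^ (k':ℕ) * 1 else 0))
      = 0 := by
  have h := eval_mid_off hd0 c ha haj hk b
  simpa [mul_ite, mul_one, mul_zero] using h

private lemma sum_pick {n : ℕ} (f : Fin n → ℂ) (k₀ : Fin n) (A : ℂ) :
    ∑ k : Fin n, f k * (if k = k₀ then A else 0) = f k₀ * A := by
  simp only [mul_ite, mul_zero]
  rw [Finset.sum_ite_eq' Finset.univ, if_pos (Finset.mem_univ _)]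

theorem party_trivial_N (d n : ℕ) (hd : 2 ≤ d) (hn : 3 ≤ n) (k₀ : Fin n)
    (E : Matrix (Fin d) (Fin d) ℂ)
    (hE : ∀ i j : ℕ, i ≤ d → j ≤ d → i ≠ j →
      ∑ x : Fin n → Fin d, (starRingEnd ℂ) (stateN d n i x) *
        (∑ b : Fin d, E (x k₀) b * stateN d n j (Function.update x k₀ b)) = 0) :
    ∃ c : ℂ, E = c • (1 : Matrix (Fin d) (Fin d) ℂ) := by
  have hd0 : 0 < d := by omega
  have hd1 : 1 < d := hd
  set ω : ℂ := Complex.exp (2 * Real.pi * Complex.I / n) with hω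
  have hωne : ω ≠ 0 := Complex.exp_ne_zero _
  have hconj : (starRingEnd ℂ) ω = ω⁻¹ := by
    rw [hω, ← Complex.exp_conj, ← Complex.exp_neg]
    congr 1
    simp [map_div₀, Complex.conj_I, map_ofNat]
    ring
  have hprim : IsPrimitiveRoot ω n := Complex.isPrimitiveRoot_exp n (by omega)
  have hgeominv : ∑ k : Fin n, (ω⁻¹) ^ (k:ℕ) = 0 := by
    rw [Fin.sum_univ_eq_sum_range (fun i => (ω⁻¹) ^ i) n]
    exact hprim.inv.geom_sum_eq_zero (by omega)
  have hs0 : stateN d n 0 = fun x =>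
      (if ∀ l, (x l : ℕ) = 0 then (1:ℂ) else 0) -
      (if ∀ l, (x l : ℕ) = 1 then (1:ℂ) else 0) := by
    rw [stateN, if_pos rfl]
  have hsmid : ∀ i : ℕ, i ≠ 0 → i < d → stateN d n i = fun x =>
      ∑ k : Fin n, ω ^ (k:ℕ) *
        (if ∀ l, (x l : ℕ) = (if l = k then i else 0) then (1:ℂ) else 0) := by
    intro i h1 h2
    rw [stateN, if_neg h1, if_pos h2, hω]
  have hsd : stateN d n d = fun _ => (1:ℂ) := by
    rw [stateN, if_neg (by omega), if_neg (by omega)]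
  -- turn `(b:ℕ) = (c:ℕ)` into `b = c` for collapsing sums
  have hvaliff : ∀ (b c : Fin d), ((b:ℕ) = (c:ℕ)) = (b = c) := by
    intro b c; exact propext ⟨fun h => Fin.ext h, fun h => by rw [h]⟩
  -- Case A : first row off-diagonal
  have hA : ∀ b : Fin d, (b:ℕ) ≠ 0 → E ⟨0, hd0⟩ b = 0 := by
    intro b hb
    have h := hE 0 (b:ℕ) (by omega) (le_of_lt b.isLt) (Ne.symm hb)
    rw [hs0, hsmid (b:ℕ) hb b.isLt] at h
    dsimp only at h
    simp only [map_sub, apply_ite (starRingEnd ℂ), map_one, map_zero] at h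
    rw [sum_zero hd0 hd1] at h
    dsimp only at h
    simp only [eval_mid_one hn hd1 ω (b:ℕ) k₀, eval_mid_z hd0 ω hb k₀] at h
    simp only [hvaliff, mul_ite, mul_zero, Finset.sum_const_zero, sub_zero] at h
    rw [Finset.sum_ite_eq' Finset.univ, if_pos (Finset.mem_univ _)] at h
    exact (mul_eq_zero.mp h).resolve_right (pow_ne_zero _ hωne)
  -- Case B : first column off-diagonal
  have hB : ∀ a : Fin d, (a:ℕ) ≠ 0 → E a ⟨0, hd0⟩ = 0 := by
    intro a ha
    have h := hE (a:ℕ) 0 (le_of_lt a.isLt) (by omega) ha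
    rw [hsmid (a:ℕ) ha a.isLt, hs0] at h
    dsimp only at h
    simp only [map_sum, map_mul, map_pow, apply_ite (starRingEnd ℂ),
      map_one, map_zero, hconj] at h
    rw [sum_mid hd0 a.isLt ω⁻¹] at h
    simp only [Fin.eta] at h
    simp only [eval_zero_pt hn hd0 ha] at h
    have this0 : ∀ b' : Fin d, ((b':ℕ) = 0) = (b' = ⟨0, hd0⟩) := by
      intro b'; exact propext ⟨fun h => Fin.ext h, fun h => by rw [h]⟩
    have hterm : ∀ k : Fin n,
        (∑ b' : Fin d, E ((Function.update (fun _ => (⟨0, hd0⟩ : Fin d)) k a) k₀) b' *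
            (if k = k₀ ∧ (b':ℕ) = 0 then (1:ℂ) else 0))
        = if k = k₀ then E a ⟨0, hd0⟩ else 0 := by
      intro k
      by_cases hk : k = k₀
      · subst hk
        simp [this0, Function.update_self, Finset.sum_ite_eq']
      · simp [hk]
    simp only [hterm] at h
    rw [sum_pick] at h
    exact (mul_eq_zero.mp h).resolve_left (pow_ne_zero _ (inv_ne_zero hωne))
  -- Case C : other off-diagonal entries
  have hC : ∀ a b : Fin d, (a:ℕ) ≠ 0 → (b:ℕ) ≠ 0 → a ≠ b → E a b = 0 := by
    intro a b ha hb hab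
    have h := hE (a:ℕ) (b:ℕ) (le_of_lt a.isLt) (le_of_lt b.isLt)
      (fun hh => hab (Fin.ext hh))
    rw [hsmid (a:ℕ) ha a.isLt, hsmid (b:ℕ) hb b.isLt] at h
    dsimp only at h
    simp only [map_sum, map_mul, map_pow, apply_ite (starRingEnd ℂ),
      map_one, map_zero, hconj] at h
    rw [sum_mid hd0 a.isLt ω⁻¹] at h
    simp only [Fin.eta] at h
    have hterm : ∀ k : Fin n,
        (∑ b' : Fin d, E ((Function.update (fun _ => (⟨0, hd0⟩ : Fin d)) k a) k₀) b' *
          (∑ k' : Fin n, ω ^ (k':ℕ) *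
            (if ∀ l, ((Function.update (Function.update (fun _ => (⟨0, hd0⟩ : Fin d)) k a) k₀ b') l : ℕ)
                = (if l = k' then (b:ℕ) else 0) then (1:ℂ) else 0)))
        = if k = k₀ then E a b * ω ^ (k₀:ℕ) else 0 := by
      intro k
      by_cases hk : k = k₀
      · subst hk
        rw [if_pos rfl]
        simp only [Function.update_idem, Function.update_self]
        have e1 : ∀ b' : Fin d,
            (∑ k' : Fin n, ω ^ (k':ℕ) *
              (if ∀ l, ((Function.update (fun _ => (⟨0, hd0⟩ : Fin d)) k b') l : ℕ)
                  = (if l = k' then (b:ℕ) else 0) then (1:ℂ) else 0))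
            = if (b':ℕ) = (b:ℕ) then ω ^ (k:ℕ) else 0 := fun b' =>
          eval_mid_z hd0 ω hb k b'
        simp only [e1]
        simp only [hvaliff, mul_ite, mul_zero]
        rw [Finset.sum_ite_eq' Finset.univ, if_pos (Finset.mem_univ _)]
      · rw [if_neg hk]
        refine Finset.sum_eq_zero (fun b' _ => ?_)
        rw [eval_mid_off hd0 ω ha (fun hh => hab (Fin.ext hh)) hk b', mul_zero]
    simp only [hterm] at h
    rw [sum_pick] at h
    have h2 : (ω⁻¹) ^ (k₀:ℕ) * (E a b * ω ^ (k₀:ℕ))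
        = E a b * ((ω⁻¹) ^ (k₀:ℕ) * ω ^ (k₀:ℕ)) := by ring
    rw [h2, ← mul_pow, inv_mul_cancel₀ hωne, one_pow, mul_one] at h
    exact h
  -- Case D : equal row sums
  have hD : ∀ a : Fin d, (a:ℕ) ≠ 0 →
      ∑ b, E a b = ∑ b, E ⟨0, hd0⟩ b := by
    intro a ha
    have h := hE (a:ℕ) d (le_of_lt a.isLt) (le_refl d) (Nat.ne_of_lt a.isLt)
    rw [hsmid (a:ℕ) ha a.isLt, hsd] at h
    dsimp only at h
    simp only [mul_one, map_sum, map_mul, map_pow, apply_ite (starRingEnd ℂ),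
      map_one, map_zero, hconj] at h
    rw [sum_mid hd0 a.isLt ω⁻¹] at h
    simp only [Fin.eta] at h
    have hupdate : ∀ k : Fin n,
        (Function.update (fun _ => (⟨0, hd0⟩ : Fin d)) k a) k₀
          = if k = k₀ then a else ⟨0, hd0⟩ := by
      intro k
      rw [Function.update_apply]
      by_cases hk : k = k₀
      · rw [if_pos hk.symm, if_pos hk]
      · rw [if_neg (fun hh => hk hh.symm), if_neg hk]
    simp only [hupdate] at h
    have hterm : ∀ k : Fin n,
        (∑ b' : Fin d, E (if k = k₀ then a else ⟨0, hd0⟩) b')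
        = (∑ b' : Fin d, E ⟨0, hd0⟩ b') +
          (if k = k₀ then (∑ b' : Fin d, E a b') - (∑ b' : Fin d, E ⟨0, hd0⟩ b') else 0) := by
      intro k
      by_cases hk : k = k₀ <;> simp [hk]
    simp only [hterm, mul_add] at h
    rw [Finset.sum_add_distrib, ← Finset.sum_mul, hgeominv, zero_mul, zero_add] at h
    simp only [mul_ite, mul_zero] at h
    rw [Finset.sum_ite_eq' Finset.univ, if_pos (Finset.mem_univ _)] at h
    have h3 := (mul_eq_zero.mp h).resolve_left (pow_ne_zero _ (inv_ne_zero hωne))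
    exact sub_eq_zero.mp h3
  have hrow : ∀ a : Fin d, ∑ b, E a b = ∑ b, E ⟨0, hd0⟩ b := by
    intro a
    by_cases ha : (a:ℕ) = 0
    · rw [show a = ⟨0, hd0⟩ from Fin.ext ha]
    · exact hD a ha
  have hoff : ∀ a b : Fin d, a ≠ b → E a b = 0 := by
    intro a b hab
    by_cases ha : (a:ℕ) = 0
    · rw [show a = ⟨0, hd0⟩ from Fin.ext ha]
      exact hA b (fun hh => hab (Fin.ext (ha.trans hh.symm)))
    · by_cases hb : (b:ℕ) = 0
      · rw [show b = ⟨0, hd0⟩ from Fin.ext hb]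
        exact hB a ha
      · exact hC a b ha hb hab
  have hdiag : ∀ a : Fin d, E a a = E ⟨0, hd0⟩ ⟨0, hd0⟩ := by
    intro a
    have h1 : ∑ b, E a b = E a a :=
      Finset.sum_eq_single a (fun b _ hb => hoff a b (Ne.symm hb))
        (fun h => absurd (Finset.mem_univ a) h)
    have h2 : ∑ b, E ⟨0, hd0⟩ b = E ⟨0, hd0⟩ ⟨0, hd0⟩ :=
      Finset.sum_eq_single _ (fun b _ hb => hoff _ b (Ne.symm hb))
        (fun h => absurd (Finset.mem_univ _) h)
    rw [← h1, hrow a, h2]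
  refine ⟨E ⟨0, hd0⟩ ⟨0, hd0⟩, ?_⟩
  ext a b
  simp only [Matrix.smul_apply, Matrix.one_apply, smul_eq_mul]
  by_cases hab : a = b
  · subst hab
    rw [if_pos rfl, mul_one, hdiag a]
  · rw [if_neg hab, mul_zero]
    exact hoff a b hab
end

section
/- Fix d ≥ 2 and n ≥ 2, let ω = e^{2πi/p} with p ≥ 2, and let |φ⟩ = ∑_{t=0}^{p−1} ω^t |i₁^t⟩⊗⋯⊗|iₙ^t⟩ be a vector in (ℂ^d)^{⊗n} whose terms |i₁^t⟩⊗⋯⊗|iₙ^t⟩ are pairwise orthogonal. Fix k and suppose the k-th indices i_k^0, …, i_k^{p−1} take exactly two values u ≠ v, with the indices equal to u occurring precisely for t in an initial segment {0, 1, …, r−1} with 0 < r < p. Let |S⟩ = (∑_{a=0}^{d−1}|a⟩)^{⊗n} be the stopper state, and let E be a d×d complex matrix all of whose off-diagonal entries vanish. Then ⟨S| E^{(k)} |φ⟩ = 0 implies E_{u,u} = E_{v,v}. -/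
open Finset

theorem diagonal_entries_lemma (d n p : ℕ) (hd : 2 ≤ d) (hn : 2 ≤ n) (hp : 2 ≤ p)
    (ι : ℕ → Fin n → Fin d)
    (horth : ∀ t s, t < p → s < p → t ≠ s → ι t ≠ ι s)
    (k : Fin n) (u v : Fin d) (huv : u ≠ v)
    (r : ℕ) (hr0 : 0 < r) (hrp : r < p)
    (hind : ∀ t, t < p → ι t k = if t < r then u else v)
    (E : Matrix (Fin d) (Fin d) ℂ)
    (hoff : ∀ a b : Fin d, a ≠ b → E a b = 0)
    (h : ∑ x : Fin n → Fin d,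
        (∑ b : Fin d, E (x k) b *
          (∑ t ∈ Finset.range p, (Complex.exp (2 * Real.pi * Complex.I / p)) ^ t *
            (if Function.update x k b = ι t then 1 else 0))) = 0) :
    E u u = E v v := by
  set ω : ℂ := Complex.exp (2 * Real.pi * Complex.I / p) with hωdef
  have hp0 : p ≠ 0 := by omega
  have hprim : IsPrimitiveRoot ω p := Complex.isPrimitiveRoot_exp p hp0
  have hω1 : ω ≠ 1 := by
    have := hprim.pow_ne_one_of_pos_of_lt (l := 1) one_ne_zero (by omega)
    simpa using this
  have hωr : ω ^ r ≠ 1 := hprim.pow_ne_one_of_pos_of_lt hr0.ne' hrp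
  -- Step 1: collapse the b-sum using that off-diagonal entries vanish
  have h1 : ∑ x : Fin n → Fin d, E (x k) (x k) *
      (∑ t ∈ Finset.range p, ω ^ t * (if x = ι t then 1 else 0)) = 0 := by
    have heq : (∑ x : Fin n → Fin d,
        (∑ b : Fin d, E (x k) b *
          (∑ t ∈ Finset.range p, ω ^ t *
            (if Function.update x k b = ι t then 1 else 0))))
        = ∑ x : Fin n → Fin d, E (x k) (x k) *
            (∑ t ∈ Finset.range p, ω ^ t * (if x = ι t then 1 else 0)) := by
      refine Finset.sum_congr rfl fun x _ => ?_
      rw [Finset.sum_eq_single (x k)]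
      · rw [Function.update_eq_self]
      · intro b _ hb
        rw [hoff (x k) b (Ne.symm hb)]; ring
      · simp
    rw [← heq]; exact h
  -- Step 2: swap sums and collapse the x-sum
  have h2 : ∑ t ∈ Finset.range p, ω ^ t * E (ι t k) (ι t k) = 0 := by
    calc ∑ t ∈ Finset.range p, ω ^ t * E (ι t k) (ι t k)
        = ∑ t ∈ Finset.range p, ∑ x : Fin n → Fin d,
            E (x k) (x k) * (ω ^ t * (if x = ι t then 1 else 0)) := by
          refine Finset.sum_congr rfl fun t _ => ?_
          rw [Finset.sum_eq_single (ι t)]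
          · simp [mul_comm]
          · intro x _ hx
            simp [hx]
          · simp
      _ = 0 := by rw [Finset.sum_comm]; simpa [Finset.mul_sum] using h1
  -- Step 3: split into initial segment and tail
  have h3 : (∑ t ∈ Finset.range r, ω ^ t) * E u u +
      (∑ t ∈ Finset.Ico r p, ω ^ t) * E v v = 0 := by
    rw [← h2, ← Finset.sum_range_add_sum_Ico _ hrp.le, Finset.sum_mul, Finset.sum_mul]
    congr 1
    · refine Finset.sum_congr rfl fun t ht => ?_
      have htr := Finset.mem_range.mp ht
      rw [hind t (lt_trans htr hrp), if_pos htr]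
    · refine Finset.sum_congr rfl fun t ht => ?_
      obtain ⟨ht1, ht2⟩ := Finset.mem_Ico.mp ht
      rw [hind t ht2, if_neg (Nat.not_lt.mpr ht1)]
  have hsum0 : (∑ t ∈ Finset.range r, ω ^ t) + (∑ t ∈ Finset.Ico r p, ω ^ t) = 0 := by
    rw [Finset.sum_range_add_sum_Ico _ hrp.le]
    exact hprim.geom_sum_eq_zero (by omega)
  have hS1 : (∑ t ∈ Finset.range r, ω ^ t) ≠ 0 := by
    rw [geom_sum_eq hω1]
    exact div_ne_zero (sub_ne_zero.mpr hωr) (sub_ne_zero.mpr hω1)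
  have key : (∑ t ∈ Finset.range r, ω ^ t) * (E u u - E v v) = 0 := by
    have hS2 : (∑ t ∈ Finset.Ico r p, ω ^ t) = -(∑ t ∈ Finset.range r, ω ^ t) := by
      linear_combination hsum0
    rw [hS2] at h3
    linear_combination h3
  have := mul_eq_zero.mp key
  rcases this with h' | h'
  · exact absurd h' hS1
  · exact sub_eq_zero.mp h'
end
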